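/- Let (x_j)_{j=1}^m be a full spark frame for ℝ^n (m≥n) and let λ_c be the infimum of all λ>0 such that (x_j)_{j=1}^m does λ-saturation recovery on the closed unit ball of ℝ^n. Then λ_c = max over unit vectors x∈ℝ^n of the maximum over all index subsets 1≤k_0<k_1<⋯<k_{m−n}≤m of min_{0≤j≤m−n} |⟨x, x_{k_j}⟩|. -/

import Mathlib

local notation "⟪" x ", " y "⟫" => @inner ℝ _ _ x y

/-- The saturation function `φ_λ`: `φ_λ(t) = t` if `|t| ≤ λ` and `φ_λ(t) = sign(t)·λ` else. -/
noncomputable def satur (l t : ℝ) : ℝ := max (-l) (min l t)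

lemma satur_eq_self {l a : ℝ} (h : |a| ≤ l) : satur l a = a := by
  rw [abs_le] at h
  rw [satur, min_eq_right h.2, max_eq_right h.1]

lemma satur_eq_of_le {l a b : ℝ} (hl : 0 ≤ l) (ha : l ≤ a) (hb : l ≤ b) :
    satur l a = satur l b := by
  rw [satur, satur, min_eq_left ha, min_eq_left hb]

lemma satur_eq_of_le_neg {l a b : ℝ} (hl : 0 ≤ l) (ha : a ≤ -l) (hb : b ≤ -l) :
    satur l a = satur l b := by
  rw [satur, satur, min_eq_right (by linarith), min_eq_right (by linarith),
    max_eq_left ha, max_eq_left hb]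

lemma eq_of_satur_eq {l a b : ℝ} (h : satur l a = satur l b) (ha : |a| < l) : a = b := by
  rw [satur_eq_self ha.le] at h
  rw [abs_lt] at ha
  rcases le_total b l with hb | hb
  · rcases le_total (-l) b with hb' | hb'
    · rwa [satur, min_eq_right hb, max_eq_right hb'] at h
    · rw [satur, min_eq_right (by linarith), max_eq_left (by linarith)] at h
      exfalso; linarith
  · rw [satur, min_eq_left hb, max_eq_right (by linarith)] at h
    exfalso; linarith

lemma myContInf {ι X : Type*} [TopologicalSpace X] {s : Finset ι} (hs : s.Nonempty)
    (f : ι → X → ℝ) (hf : ∀ i, Continuous (f i)) :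
    Continuous fun x => s.inf' hs fun i => f i x := by
  induction hs using Finset.Nonempty.cons_induction with
  | singleton a =>
    have h : (fun x => ({a} : Finset ι).inf' (Finset.singleton_nonempty a) fun i => f i x)
        = f a := by funext x; exact Finset.inf'_singleton ..
    rw [h]; exact hf a
  | cons a s ha hs ih =>
    have h : (fun x => (Finset.cons a s ha).inf' (Finset.cons_nonempty ha) fun i => f i x)
        = fun x => (f a x) ⊓ (s.inf' hs fun i => f i x) := by
      funext x; exact Finset.inf'_cons hs _
    rw [h]; exact (hf a).min ih

lemma myContSup {ι X : Type*} [TopologicalSpace X] {s : Finset ι} (hs : s.Nonempty)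
    (f : ι → X → ℝ) (hf : ∀ i, Continuous (f i)) :
    Continuous fun x => s.sup' hs fun i => f i x := by
  induction hs using Finset.Nonempty.cons_induction with
  | singleton a =>
    have h : (fun x => ({a} : Finset ι).sup' (Finset.singleton_nonempty a) fun i => f i x)
        = f a := by funext x; exact Finset.sup'_singleton ..
    rw [h]; exact hf a
  | cons a s ha hs ih =>
    have h : (fun x => (Finset.cons a s ha).sup' (Finset.cons_nonempty ha) fun i => f i x)
        = fun x => (f a x) ⊔ (s.sup' hs fun i => f i x) := by
      funext x; exact Finset.sup'_cons hs _
    rw [h]; exact (hf a).max ih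

noncomputable def Fmin {n m : ℕ} (xv : Fin m → EuclideanSpace ℝ (Fin n))
    (s : Finset (Fin m)) (x : EuclideanSpace ℝ (Fin n)) : ℝ :=
  if h : s.Nonempty then s.inf' h (fun j => |⟪x, xv j⟫|) else 0

lemma Fmin_continuous {n m : ℕ} (xv : Fin m → EuclideanSpace ℝ (Fin n))
    (s : Finset (Fin m)) : Continuous (Fmin xv s) := by
  unfold Fmin
  by_cases h : s.Nonempty
  · simp only [dif_pos h]
    exact myContInf h _ (fun j => (continuous_id.inner continuous_const).abs)
  · simp only [dif_neg h]; exact continuous_const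

lemma Fmin_le {n m : ℕ} (xv : Fin m → EuclideanSpace ℝ (Fin n))
    {s : Finset (Fin m)} {j : Fin m} (hj : j ∈ s) (x : EuclideanSpace ℝ (Fin n)) :
    Fmin xv s x ≤ |⟪x, xv j⟫| := by
  rw [Fmin, dif_pos ⟨j, hj⟩]
  exact Finset.inf'_le _ hj

lemma le_Fmin {n m : ℕ} (xv : Fin m → EuclideanSpace ℝ (Fin n))
    {s : Finset (Fin m)} (hs : s.Nonempty) {c : ℝ} {x : EuclideanSpace ℝ (Fin n)}
    (h : ∀ j ∈ s, c ≤ |⟪x, xv j⟫|) : c ≤ Fmin xv s x := by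
  rw [Fmin, dif_pos hs]
  exact Finset.le_inf' hs _ h

lemma Fmin_eq_sInf {n m : ℕ} (xv : Fin m → EuclideanSpace ℝ (Fin n))
    {s : Finset (Fin m)} (hs : s.Nonempty) (x : EuclideanSpace ℝ (Fin n)) :
    Fmin xv s x = sInf {r : ℝ | ∃ j ∈ s, r = |⟪x, xv j⟫|} := by
  rw [Fmin, dif_pos hs, Finset.inf'_eq_csInf_image]
  congr 1
  ext r
  simp [eq_comm]

lemma fullspark_ker {n m : ℕ} (xv : Fin m → EuclideanSpace ℝ (Fin n))
    (hfs : ∀ s : Finset (Fin m), s.card = n →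
      LinearIndependent ℝ (fun j : {j // j ∈ s} => xv j.1))
    (hn : 0 < n)
    (u : EuclideanSpace ℝ (Fin n)) (t : Finset (Fin m)) (ht : n ≤ t.card)
    (h0 : ∀ j ∈ t, ⟪u, xv j⟫ = 0) : u = 0 := by
  obtain ⟨t', ht't, ht'⟩ := Finset.exists_subset_card_eq ht
  have li := hfs t' ht'
  have htne : t'.Nonempty := Finset.card_pos.mp (by omega)
  haveI : Nonempty {j // j ∈ t'} := ⟨⟨htne.choose, htne.choose_spec⟩⟩
  have hsp : Submodule.span ℝ (Set.range fun j : {j // j ∈ t'} => xv j.1) = ⊤ :=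
    li.span_eq_top_of_card_eq_finrank (by simp [ht', finrank_euclideanSpace_fin])
  have hker : (⊤ : Submodule ℝ (EuclideanSpace ℝ (Fin n))) ≤
      LinearMap.ker ((innerSL ℝ u : EuclideanSpace ℝ (Fin n) →L[ℝ] ℝ) : EuclideanSpace ℝ (Fin n) →ₗ[ℝ] ℝ) := by
    rw [← hsp]
    apply Submodule.span_le.2
    rintro v ⟨j, rfl⟩
    simp only [SetLike.mem_coe, LinearMap.mem_ker, ContinuousLinearMap.coe_coe, innerSL_apply_apply]
    exact h0 j.1 (ht't j.2)
  have := hker (Submodule.mem_top (x := u))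
  simp only [LinearMap.mem_ker, ContinuousLinearMap.coe_coe, innerSL_apply_apply] at this
  exact inner_self_eq_zero.mp this

lemma exists_orth {n m : ℕ} (xv : Fin m → EuclideanSpace ℝ (Fin n))
    (t : Finset (Fin m)) (ht : t.card < n) :
    ∃ u : EuclideanSpace ℝ (Fin n), u ≠ 0 ∧ ∀ j ∈ t, ⟪u, xv j⟫ = 0 := by
  classical
  set W : Submodule ℝ (EuclideanSpace ℝ (Fin n)) :=
    Submodule.span ℝ (↑(t.image xv) : Set (EuclideanSpace ℝ (Fin n))) with hW
  have hWrank : Module.finrank ℝ W ≤ t.card :=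
    le_trans (finrank_span_finset_le_card _) (Finset.card_image_le)
  have hsum := W.finrank_add_finrank_orthogonal
  rw [finrank_euclideanSpace_fin] at hsum
  have hpos : 0 < Module.finrank ℝ Wᗮ := by omega
  have hne : Wᗮ ≠ ⊥ := by
    intro h
    rw [h, finrank_bot] at hpos
    exact lt_irrefl 0 hpos
  obtain ⟨u, huW, hu0⟩ := Submodule.exists_mem_ne_zero_of_ne_bot hne
  refine ⟨u, hu0, fun j hj => ?_⟩
  have hmem : xv j ∈ W := Submodule.subset_span (Finset.mem_coe.mpr (Finset.mem_image_of_mem xv hj))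
  have := (Submodule.mem_orthogonal W u).mp huW (xv j) hmem
  rwa [real_inner_comm] at this

theorem critical_level_eq_max_min_formula
    {n m : ℕ} (hn : 0 < n) (hmn : n ≤ m)
    (xv : Fin m → EuclideanSpace ℝ (Fin n))
    (hfs : ∀ s : Finset (Fin m), s.card = n →
      LinearIndependent ℝ (fun j : {j // j ∈ s} => xv j.1))
    (lamc : ℝ)
    (hlamc : lamc = sInf {l : ℝ | 0 < l ∧ Set.InjOn
      (fun x : EuclideanSpace ℝ (Fin n) => fun j : Fin m => satur l ⟪x, xv j⟫)
      (Metric.closedBall 0 1)}) :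
    IsGreatest {t : ℝ | ∃ x : EuclideanSpace ℝ (Fin n), ‖x‖ = 1 ∧
      ∃ s : Finset (Fin m), s.card = m - n + 1 ∧
        t = sInf {r : ℝ | ∃ j ∈ s, r = |⟪x, xv j⟫|}} lamc := by
  classical
  set S : Set ℝ := {l : ℝ | 0 < l ∧ Set.InjOn
      (fun x : EuclideanSpace ℝ (Fin n) => fun j : Fin m => satur l ⟪x, xv j⟫)
      (Metric.closedBall 0 1)} with hSdef
  set 𝒮 : Finset (Finset (Fin m)) :=
    Finset.univ.filter (fun s => s.card = m - n + 1) with h𝒮def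
  have hmem𝒮 : ∀ s : Finset (Fin m), s ∈ 𝒮 ↔ s.card = m - n + 1 := by
    intro s; simp [h𝒮def]
  have h𝒮ne : 𝒮.Nonempty := by
    obtain ⟨s, -, hs⟩ := Finset.exists_subset_card_eq
      (show m - n + 1 ≤ (Finset.univ : Finset (Fin m)).card by
        rw [Finset.card_univ, Fintype.card_fin]; omega)
    exact ⟨s, (hmem𝒮 s).mpr hs⟩
  have hnonempty_of_card : ∀ s : Finset (Fin m), s.card = m - n + 1 → s.Nonempty :=
    fun s hs => Finset.card_pos.mp (by omega)
  set g : EuclideanSpace ℝ (Fin n) → ℝ :=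
    fun x => 𝒮.sup' h𝒮ne (fun s => Fmin xv s x) with hgdef
  have hgcont : Continuous g := myContSup h𝒮ne _ (fun s => Fmin_continuous xv s)
  haveI : Nontrivial (EuclideanSpace ℝ (Fin n)) :=
    Module.nontrivial_of_finrank_pos (R := ℝ) (by rw [finrank_euclideanSpace_fin]; exact hn)
  have hsph : (Metric.sphere (0 : EuclideanSpace ℝ (Fin n)) 1).Nonempty :=
    NormedSpace.sphere_nonempty.mpr zero_le_one
  obtain ⟨x₀, hx₀mem, hx₀max⟩ :=
    (isCompact_sphere (0 : EuclideanSpace ℝ (Fin n)) 1).exists_isMaxOn hsph hgcont.continuousOn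
  have hx₀norm : ‖x₀‖ = 1 := by rwa [mem_sphere_zero_iff_norm] at hx₀mem
  set M := g x₀ with hMdef
  have hgle : ∀ x : EuclideanSpace ℝ (Fin n), ‖x‖ = 1 → g x ≤ M :=
    fun x hx => isMaxOn_iff.mp hx₀max x (mem_sphere_zero_iff_norm.mpr hx)
  have hM0 : 0 ≤ M := by
    obtain ⟨s, hs⟩ := h𝒮ne
    calc (0:ℝ) ≤ Fmin xv s x₀ :=
          le_Fmin xv (hnonempty_of_card s ((hmem𝒮 s).mp hs)) (fun j _ => abs_nonneg _)
      _ ≤ M := by rw [hMdef, hgdef]; exact Finset.le_sup' (fun s => Fmin xv s x₀) hs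
  obtain ⟨sM, hsM𝒮, hsMeq⟩ := Finset.exists_mem_eq_sup' h𝒮ne (fun s => Fmin xv s x₀)
  have hsMcard : sM.card = m - n + 1 := (hmem𝒮 sM).mp hsM𝒮
  have hsMne : sM.Nonempty := hnonempty_of_card sM hsMcard
  have hMeq : M = Fmin xv sM x₀ := hsMeq
  -- Part (A): every l > M does saturation recovery
  have hA : ∀ l : ℝ, M < l → l ∈ S := by
    intro l hMl
    have hl0 : 0 < l := lt_of_le_of_lt hM0 hMl
    refine ⟨hl0, ?_⟩
    intro x hx y hy hxy
    by_contra hne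
    have hu0 : x - y ≠ 0 := sub_ne_zero.mpr hne
    set Z : Finset (Fin m) := Finset.univ.filter (fun j => ⟪x - y, xv j⟫ = (0:ℝ)) with hZdef
    have hZ : Z.card < n := by
      by_contra hc
      push_neg at hc
      exact hu0 (fullspark_ker xv hfs hn _ Z hc (fun j hj => (Finset.mem_filter.mp hj).2))
    have hZc : m - n + 1 ≤ Zᶜ.card := by
      have h1 : Zᶜ.card = m - Z.card := by
        rw [Finset.card_compl, Fintype.card_fin]
      omega
    obtain ⟨s', hs'sub, hs'card⟩ := Finset.exists_subset_card_eq hZc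
    have hs'ne : s'.Nonempty := hnonempty_of_card s' hs'card
    have hker2 : ∀ j ∈ s', ⟪x - y, xv j⟫ ≠ (0:ℝ) := by
      intro j hj
      have h2 := hs'sub hj
      rw [Finset.mem_compl, hZdef, Finset.mem_filter] at h2
      simpa using h2
    have hlj : ∀ j ∈ s', l ≤ |⟪x, xv j⟫| ∧ l ≤ |⟪y, xv j⟫| := by
      intro j hj
      have hne' : ⟪x, xv j⟫ ≠ ⟪y, xv j⟫ := by
        have h3 := hker2 j hj
        rwa [inner_sub_left, sub_ne_zero] at h3
      have heq : satur l ⟪x, xv j⟫ = satur l ⟪y, xv j⟫ := congrFun hxy j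
      constructor
      · by_contra hcon; push_neg at hcon; exact hne' (eq_of_satur_eq heq hcon)
      · by_contra hcon; push_neg at hcon; exact hne' ((eq_of_satur_eq heq.symm hcon).symm)
    obtain ⟨w, hw0, hw1, hwl⟩ : ∃ w : EuclideanSpace ℝ (Fin n),
        w ≠ 0 ∧ ‖w‖ ≤ 1 ∧ ∀ j ∈ s', l ≤ |⟪w, xv j⟫| := by
      by_cases hx0 : x = 0
      · refine ⟨y, ?_, ?_, fun j hj => (hlj j hj).2⟩
        · intro h; exact hne (by rw [hx0, h])
        · rwa [Metric.mem_closedBall, dist_zero_right] at hy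
      · exact ⟨x, hx0, by rwa [Metric.mem_closedBall, dist_zero_right] at hx,
          fun j hj => (hlj j hj).1⟩
    have hwpos : 0 < ‖w‖ := norm_pos_iff.mpr hw0
    have hinv : (1:ℝ) ≤ ‖w‖⁻¹ := (one_le_inv₀ hwpos).mpr hw1
    have hwn : ‖(‖w‖⁻¹ • w : EuclideanSpace ℝ (Fin n))‖ = 1 := norm_smul_inv_norm (𝕜 := ℝ) hw0
    have hkey : ∀ j ∈ s', l ≤ |⟪(‖w‖⁻¹ • w : EuclideanSpace ℝ (Fin n)), xv j⟫| := by
      intro j hj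
      have h1 : |⟪(‖w‖⁻¹ • w : EuclideanSpace ℝ (Fin n)), xv j⟫| = ‖w‖⁻¹ * |⟪w, xv j⟫| := by
        rw [real_inner_smul_left, abs_mul, abs_of_nonneg (inv_nonneg.mpr (norm_nonneg w))]
      rw [h1]
      calc l ≤ |⟪w, xv j⟫| := hwl j hj
        _ = 1 * |⟪w, xv j⟫| := (one_mul _).symm
        _ ≤ ‖w‖⁻¹ * |⟪w, xv j⟫| := mul_le_mul_of_nonneg_right hinv (abs_nonneg _)
    have h3 : l ≤ Fmin xv s' (‖w‖⁻¹ • w) := le_Fmin xv hs'ne hkey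
    have h4 : Fmin xv s' (‖w‖⁻¹ • w) ≤ g (‖w‖⁻¹ • w) := by
      rw [hgdef]; exact Finset.le_sup' (fun s => Fmin xv s (‖w‖⁻¹ • w)) ((hmem𝒮 s').mpr hs'card)
    have h5 : g (‖w‖⁻¹ • w) ≤ M := hgle _ hwn
    linarith
  -- Part (B): every l ∈ S satisfies M ≤ l
  have hB : ∀ l ∈ S, M ≤ l := by
    rintro l ⟨hl0, hinj⟩
    by_contra hcon
    push_neg at hcon
    have hMpos : 0 < M := lt_trans hl0 hcon
    have hcompl : sMᶜ.card < n := by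
      have h1 : sMᶜ.card = m - sM.card := by
        rw [Finset.card_compl, Fintype.card_fin]
      omega
    obtain ⟨u, hu0, hu⟩ := exists_orth xv sMᶜ hcompl
    have hunorm : 0 < ‖u‖ := norm_pos_iff.mpr hu0
    set c : ℝ := (l + M) / (2 * M) with hcdef
    have hcM : c * M = (l + M) / 2 := by
      rw [hcdef]; field_simp
    have hc0 : 0 < c := div_pos (by linarith) (by linarith)
    have hc1 : c < 1 := by rw [hcdef, div_lt_one (by linarith)]; linarith
    have hlcM : l < c * M := by rw [hcM]; linarith
    set D : ℝ := sM.sup' hsMne (fun j => |⟪u, xv j⟫|) with hDdef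
    have hD : ∀ j ∈ sM, |⟪u, xv j⟫| ≤ D := fun j hj => by
      rw [hDdef]; exact Finset.le_sup' (fun j => |⟪u, xv j⟫|) hj
    have hD0 : 0 ≤ D := by
      obtain ⟨j, hj⟩ := hsMne
      exact le_trans (abs_nonneg _) (hD j hj)
    set ε : ℝ := min ((1 - c) / ‖u‖) ((c * M - l) / (D + 1)) with hεdef
    have hε0 : 0 < ε :=
      lt_min (div_pos (by linarith) hunorm) (div_pos (by linarith) (by linarith))
    have hεu : ε * ‖u‖ ≤ 1 - c := by
      have h1 : ε ≤ (1 - c) / ‖u‖ := min_le_left _ _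
      calc ε * ‖u‖ ≤ ((1 - c) / ‖u‖) * ‖u‖ :=
            mul_le_mul_of_nonneg_right h1 (norm_nonneg u)
        _ = 1 - c := by field_simp
    have hεD : ∀ j ∈ sM, ε * |⟪u, xv j⟫| < c * M - l := by
      intro j hj
      have h1 : ε ≤ (c * M - l) / (D + 1) := min_le_right _ _
      have h2 : ε * (D + 1) ≤ c * M - l := by
        rw [← le_div_iff₀ (show (0:ℝ) < D + 1 by linarith)]; exact h1
      nlinarith [hD j hj, hε0]
    set x1 : EuclideanSpace ℝ (Fin n) := c • x₀ with hx1def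
    set x2 : EuclideanSpace ℝ (Fin n) := x1 + ε • u with hx2def
    have hx1norm : ‖x1‖ = c := by
      rw [hx1def, norm_smul, hx₀norm, mul_one, Real.norm_eq_abs, abs_of_pos hc0]
    have hx1mem : x1 ∈ Metric.closedBall (0 : EuclideanSpace ℝ (Fin n)) 1 := by
      rw [Metric.mem_closedBall, dist_zero_right, hx1norm]; linarith
    have hx2mem : x2 ∈ Metric.closedBall (0 : EuclideanSpace ℝ (Fin n)) 1 := by
      rw [Metric.mem_closedBall, dist_zero_right, hx2def]
      calc ‖x1 + ε • u‖ ≤ ‖x1‖ + ‖ε • u‖ := norm_add_le _ _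
        _ = c + ε * ‖u‖ := by
            rw [hx1norm, norm_smul, Real.norm_eq_abs, abs_of_pos hε0]
        _ ≤ 1 := by linarith
    have hMle : ∀ j ∈ sM, M ≤ |⟪x₀, xv j⟫| := by
      intro j hj
      rw [hMeq]
      exact Fmin_le xv hj x₀
    have hsat : (fun j : Fin m => satur l ⟪x1, xv j⟫)
        = (fun j : Fin m => satur l ⟪x2, xv j⟫) := by
      funext j
      by_cases hj : j ∈ sM
      · have ha : c * M ≤ |⟪x1, xv j⟫| := by
          rw [hx1def, real_inner_smul_left, abs_mul, abs_of_pos hc0]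
          exact mul_le_mul_of_nonneg_left (hMle j hj) hc0.le
        have hdiff : |⟪x2, xv j⟫ - ⟪x1, xv j⟫| < c * M - l := by
          rw [hx2def, inner_add_left, add_sub_cancel_left, real_inner_smul_left,
            abs_mul, abs_of_pos hε0]
          exact hεD j hj
        rw [abs_lt] at hdiff
        rcases le_or_gt 0 ⟪x1, xv j⟫ with hsgn | hsgn
        · rw [abs_of_nonneg hsgn] at ha
          exact satur_eq_of_le hl0.le (by linarith) (by linarith)
        · rw [abs_of_neg hsgn] at ha
          exact satur_eq_of_le_neg hl0.le (by linarith) (by linarith)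
      · have h0 : ⟪u, xv j⟫ = (0:ℝ) := hu j (Finset.mem_compl.mpr hj)
        have h1 : ⟪x2, xv j⟫ = ⟪x1, xv j⟫ := by
          rw [hx2def, inner_add_left, real_inner_smul_left (x := u), h0, mul_zero, add_zero]
        rw [h1]
    have heq : x1 = x2 := hinj hx1mem hx2mem hsat
    rw [hx2def, left_eq_add] at heq
    exact smul_ne_zero (ne_of_gt hε0) hu0 heq
  -- conclude sInf S = M
  have hSne : S.Nonempty := ⟨M + 1, hA (M + 1) (by linarith)⟩
  have hbdd : BddBelow S := ⟨M, fun l hl => hB l hl⟩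
  have hinfge : M ≤ sInf S := le_csInf hSne hB
  have hinfle : sInf S ≤ M := by
    apply le_of_forall_pos_le_add
    intro ε hε
    exact csInf_le hbdd (hA (M + ε) (by linarith))
  have hlamcM : lamc = M := by rw [hlamc]; exact le_antisymm hinfle hinfge
  rw [hlamcM]
  constructor
  · exact ⟨x₀, hx₀norm, sM, hsMcard, by rw [← Fmin_eq_sInf xv hsMne x₀]; exact hMeq⟩
  · rintro t ⟨x, hx1, s, hscard, hteq⟩
    have hsne' := hnonempty_of_card s hscard
    rw [hteq, ← Fmin_eq_sInf xv hsne' x]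
    calc Fmin xv s x ≤ g x := by
          rw [hgdef]; exact Finset.le_sup' (fun s => Fmin xv s x) ((hmem𝒮 s).mpr hscard)
      _ ≤ M := hgle x hx1
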